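/- Let γ : ℝ → ℂ be differentiable, let t ∈ ℝ, let x ∈ ℝⁿ be a unit vector, and let u, v ∈ ℝⁿ satisfy ⟨x,u⟩ = ⟨x,v⟩ = 0. Then for all real numbers a, b, the standard symplectic form ω on ℂⁿ satisfies ω(a·γ'(t)•x + γ(t)•u, b·γ'(t)•x + γ(t)•v) = 0. In particular every tangent space of the map j : ℝ × S^{n-1} → ℂⁿ, j(t,x) = γ(t)•x, is isotropic for ω. -/
import Mathlib


open Complex

/-- The standard symplectic form on ℂⁿ: ω(u,v) = Im⟨u,v⟩. -/
noncomputable def omegaC {n : ℕ} (u v : Fin n → ℂ) : ℝ :=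
  (∑ i, (starRingEnd ℂ) (u i) * v i).im

/-- Inclusion of real vectors into ℂⁿ. -/
def incl {n : ℕ} (x : Fin n → ℝ) : Fin n → ℂ := fun i => (x i : ℂ)

theorem stmt1 (n : ℕ) (γ : ℝ → ℂ) (hγ : Differentiable ℝ γ) (t : ℝ)
    (x u v : Fin n → ℝ) (hx : ∑ i, x i * x i = 1)
    (hu : ∑ i, x i * u i = 0) (hv : ∑ i, x i * v i = 0) (a b : ℝ) :
    omegaC (((a : ℂ) * deriv γ t) • incl x + γ t • incl u)
           (((b : ℂ) * deriv γ t) • incl x + γ t • incl v) = 0 := by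
  set c := deriv γ t
  set g := γ t
  have key : (∑ i, (starRingEnd ℂ) ((((a : ℂ) * c) • incl x + g • incl u) i) *
      ((((b : ℂ) * c) • incl x + g • incl v) i)) =
      (starRingEnd ℂ) ((a : ℂ) * c) * ((b : ℂ) * c) * (∑ i, (x i : ℂ) * x i)
      + (starRingEnd ℂ) ((a : ℂ) * c) * g * (∑ i, (x i : ℂ) * v i)
      + (starRingEnd ℂ) g * ((b : ℂ) * c) * (∑ i, (x i : ℂ) * u i)
      + (starRingEnd ℂ) g * g * (∑ i, (u i : ℂ) * v i) := by
    simp only [Finset.mul_sum, ← Finset.sum_add_distrib]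
    refine Finset.sum_congr rfl fun i _ => ?_
    simp only [Pi.add_apply, Pi.smul_apply, incl, smul_eq_mul, map_mul, map_add,
      Complex.conj_ofReal]
    ring
  have hxc : (∑ i, (x i : ℂ) * x i) = 1 := by
    rw [show (1:ℂ) = ((1:ℝ):ℂ) from rfl, ← hx]; push_cast; rfl
  have huc : (∑ i, (x i : ℂ) * u i) = 0 := by
    rw [show (0:ℂ) = ((0:ℝ):ℂ) from rfl, ← hu]; push_cast; rfl
  have hvc : (∑ i, (x i : ℂ) * v i) = 0 := by
    rw [show (0:ℂ) = ((0:ℝ):ℂ) from rfl, ← hv]; push_cast; rfl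
  have huvc : (∑ i, (u i : ℂ) * v i) = ((∑ i, u i * v i : ℝ) : ℂ) := by
    push_cast; rfl
  rw [omegaC, key, hxc, huc, hvc, huvc]
  simp only [map_mul, Complex.conj_ofReal, mul_zero, mul_one, add_zero, zero_add]
  have : ((a:ℂ) * (starRingEnd ℂ) c * ((b:ℂ) * c) + (starRingEnd ℂ) g * g *
      ((∑ i, u i * v i : ℝ) : ℂ)).im = 0 := by
    rw [Complex.add_im]
    have h1 : ((a:ℂ) * (starRingEnd ℂ) c * ((b:ℂ) * c)).im =
        (a * b) * ((starRingEnd ℂ) c * c).im := by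
      simp [Complex.mul_im, Complex.mul_re, Complex.ofReal_im, Complex.ofReal_re]; ring
    have h2 : ((starRingEnd ℂ) c * c).im = 0 := by
      simp [Complex.mul_im, Complex.conj_re, Complex.conj_im]; ring
    have h3 : ((starRingEnd ℂ) g * g * ((∑ i, u i * v i : ℝ) : ℂ)).im =
        ((starRingEnd ℂ) g * g).im * (∑ i, u i * v i : ℝ) := by
      simp [Complex.mul_im, Complex.ofReal_im, Complex.ofReal_re]
    have h4 : ((starRingEnd ℂ) g * g).im = 0 := by
      simp [Complex.mul_im, Complex.conj_re, Complex.conj_im]; ring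
    rw [h1, h2, h3, h4]; ring
  convert this using 2
  all_goals ring
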